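/- arXiv:1608.02220 — 2 statements merged into one kernel-verified Lean document; each statement's English description precedes it below -/
import Mathlib

section
/- Let G: ℕ → Grp be a tower of groups satisfying the Mittag-Leffler condition. Then the natural map Ab(lim_n G_n) → lim_n Ab(G_n) is surjective and its kernel is a cotorsion abelian group. -/
open CategoryTheory

/-- An abelian group `A` is cotorsion if `Ext¹_ℤ(ℚ, A) = 0`. -/
def IsCotorsion (A : Type) [AddCommGroup A] : Prop :=
  Subsingleton (((Ext ℤ (ModuleCat ℤ) 1).obj (Opposite.op (ModuleCat.of ℤ ℚ))).obj
    (ModuleCat.of ℤ A))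

/-- The limit of a tower of groups, as a subgroup of the product. -/
def towerLimit (G : ℕ → Type) [∀ n, Group (G n)] (g : ∀ n, G (n + 1) →* G n) :
    Subgroup (∀ n, G n) where
  carrier := {x | ∀ n, g n (x (n + 1)) = x n}
  one_mem' := by intro n; simp
  mul_mem' := by intro a b ha hb n; simp [ha n, hb n]
  inv_mem' := by intro a ha n; simp [ha n]

/-- The composite structure map `G (n+k) →* G n` of a tower. -/
def chain (G : ℕ → Type) [∀ n, Group (G n)] (g : ∀ n, G (n + 1) →* G n) :
    ∀ n k : ℕ, G (n + k) →* G n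
  | n, 0 => MonoidHom.id (G n)
  | n, (k + 1) => (chain G g n k).comp (g (n + k))

/-- The Mittag-Leffler condition for a tower of groups: for each `n` the decreasing
images `im (G m → G n)` stabilize. -/
def MittagLeffler (G : ℕ → Type) [∀ n, Group (G n)] (g : ∀ n, G (n + 1) →* G n) : Prop :=
  ∀ n : ℕ, ∃ k : ℕ, ∀ k' : ℕ, k ≤ k' → (chain G g n k).range = (chain G g n k').range

/-- The natural map `lim G → lim Ab(G)` induced by the abelianization projections. -/
def towerToLimAb (G : ℕ → Type) [∀ n, Group (G n)] (g : ∀ n, G (n + 1) →* G n) :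
    towerLimit G g →*
      towerLimit (fun n => Abelianization (G n)) (fun n => Abelianization.map (g n)) :=
  MonoidHom.codRestrict
    (MonoidHom.mk' (fun x n => Abelianization.of (x.1 n))
      (by intro a b; funext n; simp)) _
    (by
      intro x n
      show Abelianization.map (g n) (Abelianization.of (x.1 (n + 1))) = Abelianization.of (x.1 n)
      rw [Abelianization.map_of, x.2 n])

/-- The natural map `Ab(lim G) → lim Ab(G)`. -/
def abLimToLimAb (G : ℕ → Type) [∀ n, Group (G n)] (g : ∀ n, G (n + 1) →* G n) :
    Abelianization (towerLimit G g) →*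
      towerLimit (fun n => Abelianization (G n)) (fun n => Abelianization.map (g n)) :=
  Abelianization.lift (towerToLimAb G g)


section TowerBasics

variable {G : ℕ → Type} [∀ n, Group (G n)]

/-- Cast between levels of a tower along an index equality. -/
def cE {a b : ℕ} (e : a = b) : G a ≃* G b where
  toFun x := e ▸ x
  invFun x := e.symm ▸ x
  left_inv x := by subst e; rfl
  right_inv x := by subst e; rfl
  map_mul' x y := by subst e; rfl

@[simp] lemma cE_rfl {a : ℕ} (e : a = a) (x : G a) : cE (G := G) e x = x := rfl

lemma cE_g (g : ∀ n, G (n + 1) →* G n) {a b : ℕ} (e : a = b) (e' : a + 1 = b + 1)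
    (x : G (a + 1)) : g b (cE e' x) = cE e (g a x) := by
  subst e; rfl

lemma cE_cE {a b c : ℕ} (e1 : a = b) (e2 : c = b) (x : G a) :
    (cE (G := G) e2).symm (cE (G := G) e1 x) = cE (e1.trans e2.symm) x := by
  subst e1; subst e2; rfl

lemma cE_symm_apply {a b : ℕ} (e : a = b) (x : G a) :
    (cE (G := G) e).symm (cE (G := G) e x) = x := by subst e; rfl

variable (G) in
lemma cE_commutator {a b : ℕ} (e : a = b) (x : G a) (hx : x ∈ commutator (G a)) :
    cE (G := G) e x ∈ commutator (G b) := by subst e; exact hx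

variable (G)
variable (g : ∀ n, G (n + 1) →* G n)


lemma chain_succ_left (n : ℕ) : ∀ (r : ℕ) (x : G (n + (r + 1))) (e : n + (r + 1) = (n + 1) + r),
    chain G g n (r + 1) x = g n (chain G g (n + 1) r (cE e x)) := by
  intro r
  induction r with
  | zero => intro x e; rfl
  | succ r ih =>
    intro x e
    have e' : n + (r + 1) = (n + 1) + r := by omega
    show chain G g n (r + 1) (g (n + (r + 1)) x) = _
    rw [ih (g (n + (r + 1)) x) e']
    show _ = g n (chain G g (n + 1) r (g ((n + 1) + r) (cE e x)))
    have key : cE e' (g (n + (r + 1)) x) = g ((n + 1) + r) (cE e x) :=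
      (cE_g g e' e x).symm
    rw [key]

lemma chain_add (n p : ℕ) : ∀ (q : ℕ) (x : G (n + (p + q))) (e : n + (p + q) = (n + p) + q),
    chain G g n (p + q) x = chain G g n p (chain G g (n + p) q (cE e x)) := by
  intro q
  induction q with
  | zero => intro x e; rfl
  | succ q ih =>
    intro x e
    have e' : n + (p + q) = (n + p) + q := by omega
    show chain G g n (p + q) (g (n + (p + q)) x) = _
    rw [ih (g (n + (p + q)) x) e']
    show _ = chain G g n p (chain G g (n + p) q (g ((n + p) + q) (cE e x)))
    have key : cE e' (g (n + (p + q)) x) = g ((n + p) + q) (cE e x) :=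
      (cE_g g e' e x).symm
    rw [key]

/-- Coherence: a compatible family is determined by deep levels. -/
lemma chain_coherent {n : ℕ} (u : ∀ m, G (n + m)) (hu : ∀ m, g (n + m) (u (m + 1)) = u m) :
    ∀ m, chain G g n m (u m) = u 0 := by
  intro m
  induction m with
  | zero => rfl
  | succ m ih =>
    show chain G g n m (g (n + m) (u (m + 1))) = u 0
    rw [hu m, ih]

lemma towerLimit_chain (x : towerLimit G g) (n : ℕ) :
    ∀ r, chain G g n r (x.1 (n + r)) = x.1 n :=
  chain_coherent G g (fun m => x.1 (n + m)) (fun m => x.2 (n + m))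

/-- A compatible family above level `n` extends to an element of the limit. -/
lemma exists_towerLimit_of_seq {n : ℕ} (u : ∀ m, G (n + m))
    (hu : ∀ m, g (n + m) (u (m + 1)) = u m) :
    ∃ x : towerLimit G g, x.1 n = u 0 := by
  refine ⟨⟨fun j => chain G g j n (cE (Nat.add_comm n j) (u j)), ?_⟩, ?_⟩
  · intro j
    show g j (chain G g (j + 1) n (cE (Nat.add_comm n (j + 1)) (u (j + 1)))) = _
    have e : j + (n + 1) = (j + 1) + n := by omega
    have e3 : n + (j + 1) = j + (n + 1) := by omega
    set x0 : G (j + (n + 1)) := cE e3 (u (j + 1)) with hx0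
    have h1 : cE (Nat.add_comm n (j + 1)) (u (j + 1)) = cE e x0 := by
      rw [hx0]
      have := cE_cE (G := G) (Nat.add_comm n (j + 1)) e (u (j + 1))
      rw [← this]
      exact ((cE (G := G) e).apply_symm_apply _).symm
    rw [h1, ← chain_succ_left G g j n x0 e]
    show chain G g j n (g (j + n) x0) = _
    have e4 : n + j = j + n := Nat.add_comm n j
    have key : g (j + n) x0 = cE e4 (g (n + j) (u (j + 1))) := by
      rw [hx0]; exact cE_g g e4 e3 (u (j + 1))
    rw [key, hu j]
  · show chain G g n n (cE (Nat.add_comm n n) (u n)) = u 0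
    rw [cE_rfl, chain_coherent G g u hu n]

end TowerBasics

section AbelHelpers

variable {H : Type} [Group H]

lemma abel_of_eq_one_iff (x : H) : Abelianization.of x = 1 ↔ x ∈ commutator H :=
  QuotientGroup.eq_one_iff x

lemma abel_of_surjective : Function.Surjective (Abelianization.of (G := H)) := fun y =>
  Quot.inductionOn y fun z => ⟨z, (Abelianization.mk_eq_of z).symm⟩

end AbelHelpers

section MLSetup

variable (G : ℕ → Type) [∀ n, Group (G n)] (g : ∀ n, G (n + 1) →* G n)

/-- The abelianized tower. -/
abbrev AbT : ℕ → Type := fun n => Abelianization (G n)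

/-- The abelianized structure maps. -/
abbrev abg : ∀ n, AbT G (n + 1) →* AbT G n := fun n => Abelianization.map (g n)

lemma of_chain (n : ℕ) : ∀ (r : ℕ) (x : G (n + r)),
    Abelianization.of (chain G g n r x) = chain (AbT G) (abg G g) n r (Abelianization.of x) := by
  intro r
  induction r with
  | zero => intro x; rfl
  | succ r ih =>
    intro x
    show Abelianization.of (chain G g n r (g (n + r) x)) = _
    rw [ih (g (n + r) x)]
    show _ = chain (AbT G) (abg G g) n r (Abelianization.map (g (n + r)) (Abelianization.of x))
    rw [Abelianization.map_of]

variable (hML : MittagLeffler G g)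

/-- Stabilization index. -/
noncomputable def kk (n : ℕ) : ℕ := (hML n).choose

/-- The stable image subgroup. -/
noncomputable def HS (n : ℕ) : Subgroup (G n) := (chain G g n (kk G g hML n)).range

lemma range_chain {n r : ℕ} (h : kk G g hML n ≤ r) :
    (chain G g n r).range = HS G g hML n := ((hML n).choose_spec r h).symm

lemma map_chain_commutator {n r : ℕ} (h : kk G g hML n ≤ r) :
    Subgroup.map (chain G g n r) (commutator (G (n + r)))
      = ⁅HS G g hML n, HS G g hML n⁆ := by
  rw [commutator, Subgroup.map_commutator, ← MonoidHom.range_eq_map, range_chain G g hML h]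

lemma g_HS (n : ℕ) : Subgroup.map (g n) (HS G g hML (n + 1)) = HS G g hML n := by
  set r := max (kk G g hML n) (kk G g hML (n + 1)) with hr
  have h1 : HS G g hML (n + 1) = (chain G g (n + 1) r).range :=
    (range_chain G g hML (le_max_right _ _)).symm
  have h2 : HS G g hML n = (chain G g n (r + 1)).range :=
    (range_chain G g hML (le_trans (le_max_left _ _) (Nat.le_succ_of_le (le_refl r)))).symm
  have e : n + (r + 1) = (n + 1) + r := by omega
  ext y
  rw [h1, h2]
  constructor
  · rintro ⟨x, ⟨v, rfl⟩, rfl⟩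
    refine ⟨(cE (G := G) e).symm v, ?_⟩
    rw [chain_succ_left G g n r _ e]
    rw [(cE (G := G) e).apply_symm_apply]
  · rintro ⟨w, rfl⟩
    refine ⟨chain G g (n + 1) r (cE e w), ⟨cE e w, rfl⟩, ?_⟩
    rw [← chain_succ_left G g n r w e]

lemma mem_HS_of_lim (x : towerLimit G g) (n : ℕ) : x.1 n ∈ HS G g hML n :=
  ⟨x.1 (n + kk G g hML n), towerLimit_chain G g x n (kk G g hML n)⟩

lemma p_surj (n : ℕ) (y : G n) (hy : y ∈ HS G g hML n) :
    ∃ x : towerLimit G g, x.1 n = y := by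
  have step : ∀ m (p : {v : G (n + m) // v ∈ HS G g hML (n + m)}),
      ∃ v, v ∈ HS G g hML (n + m + 1) ∧ g (n + m) v = p.1 := by
    intro m p
    have hp : p.1 ∈ Subgroup.map (g (n + m)) (HS G g hML (n + m + 1)) := by
      rw [g_HS G g hML (n + m)]; exact p.2
    obtain ⟨v, hv, hgv⟩ := hp
    exact ⟨v, hv, hgv⟩
  let u : ∀ m, {v : G (n + m) // v ∈ HS G g hML (n + m)} := fun m =>
    Nat.rec ⟨y, hy⟩ (fun m p => ⟨(step m p).choose, (step m p).choose_spec.1⟩) m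
  have hu : ∀ m, g (n + m) (u (m + 1)).1 = (u m).1 := fun m =>
    (step m (u m)).choose_spec.2
  exact exists_towerLimit_of_seq G g (fun m => (u m).1) hu

/-- Every element of the stable commutator is the `n`-th component of a commutator
of the limit. -/
lemma exists_commutator_rep (n : ℕ) (y : G n) (hy : y ∈ ⁅HS G g hML n, HS G g hML n⁆) :
    ∃ c : towerLimit G g, c ∈ commutator (towerLimit G g) ∧ c.1 n = y := by
  set pn : towerLimit G g →* G n :=
    (Pi.evalMonoidHom G n).comp (towerLimit G g).subtype with hpn
  have hrange : pn.range = HS G g hML n := by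
    ext z
    constructor
    · rintro ⟨x, rfl⟩; exact mem_HS_of_lim G g hML x n
    · intro hz
      obtain ⟨x, hx⟩ := p_surj G g hML n z hz
      exact ⟨x, hx⟩
  have hmap : Subgroup.map pn (commutator (towerLimit G g))
      = ⁅HS G g hML n, HS G g hML n⁆ := by
    rw [commutator, Subgroup.map_commutator, ← MonoidHom.range_eq_map, hrange]
  rw [← hmap] at hy
  obtain ⟨c, hc, hcy⟩ := hy
  exact ⟨c, hc, hcy⟩

end MLSetup

section Surjectivity

variable (G : ℕ → Type) [∀ n, Group (G n)] (g : ∀ n, G (n + 1) →* G n)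
variable (hML : MittagLeffler G g)
variable (a : towerLimit (AbT G) (abg G g))

/-- `x` is a "stable representative" of the coherent abelian family `a` at level `n`. -/
def Sok (n : ℕ) (x : G n) : Prop :=
  ∃ r, kk G g hML n ≤ r ∧ ∃ z : G (n + r),
    Abelianization.of z = a.1 (n + r) ∧ chain G g n r z = x

lemma of_cE_rep {i j : ℕ} (e : i = j) (x : G i) (hx : Abelianization.of x = a.1 i) :
    Abelianization.of (cE (G := G) e x) = a.1 j := by subst e; exact hx

lemma Sok_nonempty (n : ℕ) : ∃ x, Sok G g hML a n x := by
  obtain ⟨z, hz⟩ := abel_of_surjective (a.1 (n + kk G g hML n))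
  exact ⟨chain G g n (kk G g hML n) z, kk G g hML n, le_refl _, z, hz, rfl⟩

lemma Sok_spec (n : ℕ) (x : G n) (h : Sok G g hML a n x) : Abelianization.of x = a.1 n := by
  obtain ⟨r, _, z, hz, rfl⟩ := h
  rw [of_chain G g n r z, hz]
  exact towerLimit_chain (AbT G) (abg G g) a n r

/-- Two stable representatives at level `n` differ by a stable commutator. -/
lemma Sok_diff_aux (n : ℕ) {r₁ r₂ : ℕ} (h₁ : kk G g hML n ≤ r₁) (hle : r₁ ≤ r₂)
    (z₁ : G (n + r₁)) (z₂ : G (n + r₂))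
    (hz₁ : Abelianization.of z₁ = a.1 (n + r₁)) (hz₂ : Abelianization.of z₂ = a.1 (n + r₂)) :
    (chain G g n r₁ z₁)⁻¹ * chain G g n r₂ z₂ ∈ ⁅HS G g hML n, HS G g hML n⁆ := by
  obtain ⟨q, rfl⟩ : ∃ q, r₂ = r₁ + q := ⟨r₂ - r₁, by omega⟩
  have e : n + (r₁ + q) = (n + r₁) + q := by omega
  rw [chain_add G g n r₁ q z₂ e]
  set w : G (n + r₁) := chain G g (n + r₁) q (cE e z₂) with hw
  have hofw : Abelianization.of w = a.1 (n + r₁) := by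
    rw [hw, of_chain G g (n + r₁) q]
    rw [of_cE_rep G g a e z₂ hz₂]
    exact towerLimit_chain (AbT G) (abg G g) a (n + r₁) q
  have hmem : z₁⁻¹ * w ∈ commutator (G (n + r₁)) := by
    rw [← abel_of_eq_one_iff]
    rw [map_mul, map_inv, hz₁, hofw, inv_mul_cancel]
  have : chain G g n r₁ (z₁⁻¹ * w) ∈ ⁅HS G g hML n, HS G g hML n⁆ := by
    rw [← map_chain_commutator G g hML h₁]
    exact ⟨z₁⁻¹ * w, hmem, rfl⟩
  rw [map_mul, map_inv] at this
  exact this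

lemma Sok_diff (n : ℕ) {r₁ r₂ : ℕ} (h₁ : kk G g hML n ≤ r₁) (h₂ : kk G g hML n ≤ r₂)
    (z₁ : G (n + r₁)) (z₂ : G (n + r₂))
    (hz₁ : Abelianization.of z₁ = a.1 (n + r₁)) (hz₂ : Abelianization.of z₂ = a.1 (n + r₂)) :
    (chain G g n r₁ z₁)⁻¹ * chain G g n r₂ z₂ ∈ ⁅HS G g hML n, HS G g hML n⁆ := by
  rcases le_total r₁ r₂ with h | h
  · exact Sok_diff_aux G g hML a n h₁ h z₁ z₂ hz₁ hz₂
  · have := Sok_diff_aux G g hML a n h₂ h z₂ z₁ hz₂ hz₁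
    have h' := inv_mem this
    rw [mul_inv_rev, inv_inv] at h'
    exact h'

lemma Sok_step (n : ℕ) (x : G n) (h : Sok G g hML a n x) :
    ∃ y, g n y = x ∧ Sok G g hML a (n + 1) y := by
  obtain ⟨r, hr, z, hz, rfl⟩ := h
  set r' := max (kk G g hML (n + 1)) (kk G g hML n) with hr'
  obtain ⟨z', hz'⟩ := abel_of_surjective (a.1 ((n + 1) + r'))
  have e : n + (r' + 1) = (n + 1) + r' := by omega
  have hofz'' : Abelianization.of ((cE (G := G) e).symm z') = a.1 (n + (r' + 1)) :=
    of_cE_rep G g a e.symm z' hz'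
  have hr'1 : kk G g hML n ≤ r' + 1 := le_trans (le_max_right _ _) (Nat.le_succ r')
  have hdiff := Sok_diff G g hML a n hr'1 hr ((cE (G := G) e).symm z') z hofz'' hz
  rw [← map_chain_commutator G g hML hr'1] at hdiff
  obtain ⟨κ, hκ, hκeq⟩ := hdiff
  refine ⟨chain G g (n + 1) r' (z' * cE e κ), ?_, r', le_max_left _ _, z' * cE e κ, ?_, rfl⟩
  · have hgoal : z' * cE e κ = cE e ((cE (G := G) e).symm (z' * cE e κ)) :=
      ((cE (G := G) e).apply_symm_apply _).symm
    rw [hgoal, ← chain_succ_left G g n r' ((cE (G := G) e).symm (z' * cE e κ)) e]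
    rw [map_mul ((cE (G := G) e).symm) z' (cE e κ), cE_symm_apply, map_mul, hκeq]
    group
    -- the `rw` above consumed the hypothesis; handle the cast
  · rw [map_mul, hz']
    have : Abelianization.of (cE (G := G) e κ) = 1 := by
      rw [abel_of_eq_one_iff]
      exact cE_commutator G e κ hκ
    rw [this, mul_one]

include hML in
theorem surjective_abLimToLimAb : Function.Surjective (abLimToLimAb G g) := by
  intro a
  have step := Sok_step G g hML a
  let F : ∀ m, {x : G m // Sok G g hML a m x} := fun m =>
    Nat.rec ⟨(Sok_nonempty G g hML a 0).choose, (Sok_nonempty G g hML a 0).choose_spec⟩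
      (fun m p => ⟨(step m p.1 p.2).choose, (step m p.1 p.2).choose_spec.2⟩) m
  have hF : ∀ m, g m (F (m + 1)).1 = (F m).1 := fun m =>
    (step m (F m).1 (F m).2).choose_spec.1
  refine ⟨Abelianization.of ⟨fun m => (F m).1, hF⟩, ?_⟩
  show Abelianization.lift (towerToLimAb G g) (Abelianization.of _) = a
  rw [Abelianization.lift_apply_of]
  apply Subtype.ext
  funext n
  exact Sok_spec G g hML a n (F n).1 (F n).2

end Surjectivity

section Kernel

variable (G : ℕ → Type) [∀ n, Group (G n)] (g : ∀ n, G (n + 1) →* G n)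
variable (hML : MittagLeffler G g)

lemma ker_iff (X : towerLimit G g) :
    Abelianization.of X ∈ (abLimToLimAb G g).ker ↔ ∀ n, X.1 n ∈ commutator (G n) := by
  rw [MonoidHom.mem_ker]
  show Abelianization.lift (towerToLimAb G g) (Abelianization.of X) = 1 ↔ _
  rw [Abelianization.lift_apply_of]
  constructor
  · intro h n
    have := congrArg (fun v : towerLimit (AbT G) (abg G g) => v.1 n) h
    rw [← abel_of_eq_one_iff]
    exact this
  · intro h
    apply Subtype.ext
    funext n
    exact (abel_of_eq_one_iff _).mpr (h n)

lemma comp_commutator (X : towerLimit G g) (hX : X ∈ commutator (towerLimit G g)) (m : ℕ) :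
    X.1 m ∈ commutator (G m) := by
  set pm : towerLimit G g →* G m :=
    (Pi.evalMonoidHom G m).comp (towerLimit G g).subtype with hpm
  have h1 : pm X ∈ Subgroup.map pm (commutator (towerLimit G g)) :=
    Subgroup.mem_map_of_mem pm hX
  have h2 : Subgroup.map pm (commutator (towerLimit G g)) ≤ commutator (G m) := by
    rw [commutator, Subgroup.map_commutator]
    exact Subgroup.commutator_mono le_top le_top
  exact h2 h1

lemma comp_eq_one_of_le (X : towerLimit G g) {i j : ℕ} (h : i ≤ j) (hj : X.1 j = 1) :
    X.1 i = 1 := by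
  have e : i + (j - i) = j := by omega
  have h1 : X.1 (i + (j - i)) = 1 := by rw [e]; exact hj
  have := towerLimit_chain G g X i (j - i)
  rw [h1, map_one] at this
  exact this.symm

include hML in
lemma exists_small_rep (n : ℕ) (c : Abelianization (towerLimit G g))
    (hc : c ∈ (abLimToLimAb G g).ker) :
    ∃ X : towerLimit G g, (∀ m, X.1 m ∈ commutator (G m)) ∧ X.1 n = 1 ∧
      Abelianization.of X = c := by
  obtain ⟨Z, rfl⟩ := abel_of_surjective c
  have hZ : ∀ m, Z.1 m ∈ commutator (G m) := (ker_iff G g Z).mp hc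
  have hZn : Z.1 n ∈ ⁅HS G g hML n, HS G g hML n⁆ := by
    rw [← map_chain_commutator G g hML (le_refl (kk G g hML n))]
    exact ⟨Z.1 (n + kk G g hML n), hZ _, towerLimit_chain G g Z n (kk G g hML n)⟩
  obtain ⟨c', hc', hc'n⟩ := exists_commutator_rep G g hML n (Z.1 n) hZn
  refine ⟨c'⁻¹ * Z, fun m => ?_, ?_, ?_⟩
  · show (c'.1 m)⁻¹ * Z.1 m ∈ commutator (G m)
    exact mul_mem (inv_mem (comp_commutator G g c' hc' m)) (hZ m)
  · show (c'.1 n)⁻¹ * Z.1 n = 1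
    rw [hc'n, inv_mul_cancel]
  · rw [map_mul, map_inv, (abel_of_eq_one_iff (c' : towerLimit G g)).mpr hc', inv_one, one_mul]

include hML in
lemma solvable (c : ℕ → (abLimToLimAb G g).ker) :
    ∃ x : ℕ → (abLimToLimAb G g).ker, ∀ n, x n = c n * (x (n + 1)) ^ (n + 2) := by
  have hrep := fun n => exists_small_rep G g hML n (c n).1 (c n).2
  choose rep hrep1 hrep2 hrep3 using hrep
  let T : ℕ → ℕ → towerLimit G g := fun R =>
    Nat.rec (motive := fun _ => ℕ → towerLimit G g) (fun _ => 1)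
      (fun _ TR n => rep n * (TR (n + 1)) ^ (n + 2)) R
  have hTs : ∀ R n, T (R + 1) n = rep n * (T R (n + 1)) ^ (n + 2) := fun R n => rfl
  have hcomp : ∀ R n m, (T R n).1 m ∈ commutator (G m) := by
    intro R
    induction R with
    | zero => intro n m; exact one_mem _
    | succ R ih =>
      intro n m
      show (rep n).1 m * ((T R (n + 1)).1 m) ^ (n + 2) ∈ commutator (G m)
      exact mul_mem (hrep1 n m) (pow_mem (ih (n + 1) m) _)
  have hS2 : ∀ R n m, m ≤ n + R → (T (R + 1) n).1 m = (T R n).1 m := by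
    intro R
    induction R with
    | zero =>
      intro n m hm
      show (rep n).1 m * ((1 : towerLimit G g).1 m) ^ (n + 2) = (1 : towerLimit G g).1 m
      show (rep n).1 m * (1 : G m) ^ (n + 2) = (1 : G m)
      rw [one_pow, mul_one]
      exact comp_eq_one_of_le G g (rep n) hm (hrep2 n)
    | succ R ih =>
      intro n m hm
      show (rep n).1 m * ((T (R + 1) (n + 1)).1 m) ^ (n + 2)
          = (rep n).1 m * ((T R (n + 1)).1 m) ^ (n + 2)
      rw [ih (n + 1) m (by omega)]
  have hS2' : ∀ R' R, R ≤ R' → ∀ n m, m ≤ n + R → (T R' n).1 m = (T R n).1 m := by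
    intro R'
    induction R' with
    | zero =>
      intro R h n m hm
      have : R = 0 := by omega
      subst this; rfl
    | succ R' ih =>
      intro R h n m hm
      rcases Nat.eq_or_lt_of_le h with h' | h'
      · subst h'; rfl
      · rw [hS2 R' n m (by omega)]
        exact ih R (by omega) n m hm
  let XA : ℕ → towerLimit G g := fun n =>
    ⟨fun m => (T (m + 1) n).1 m, by
      intro m
      have h1 := (T (m + 2) n).2 m
      have h2 : (T (m + 2) n).1 m = (T (m + 1) n).1 m :=
        hS2' (m + 2) (m + 1) (by omega) n m (by omega)
      exact h1.trans h2⟩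
  have hXArec : ∀ n, XA n = rep n * (XA (n + 1)) ^ (n + 2) := by
    intro n
    apply Subtype.ext
    funext m
    show (T (m + 1) n).1 m = (rep n).1 m * ((T (m + 1) (n + 1)).1 m) ^ (n + 2)
    have h1 : (T (m + 2) n).1 m = (rep n).1 m * ((T (m + 1) (n + 1)).1 m) ^ (n + 2) := rfl
    rw [← h1]
    exact (hS2 (m + 1) n m (by omega)).symm
  refine ⟨fun n => ⟨Abelianization.of (XA n), (ker_iff G g (XA n)).mpr
    (fun m => hcomp (m + 1) n m)⟩, ?_⟩
  intro n
  apply Subtype.ext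
  show Abelianization.of (XA n) = ((c n : Abelianization (towerLimit G g)))
      * (Abelianization.of (XA (n + 1))) ^ (n + 2)
  rw [hXArec n, map_mul, map_pow, hrep3 n]

end Kernel

section Resolution

open Finsupp

/-- The differential of the free resolution of `ℚ`. -/
noncomputable def dF : (ℕ →₀ ℤ) →ₗ[ℤ] (ℕ →₀ ℤ) :=
  Finsupp.lsum ℤ fun n => LinearMap.toSpanSingleton ℤ (ℕ →₀ ℤ)
    (Finsupp.single n 1 - (n + 2 : ℤ) • Finsupp.single (n + 1) 1)

/-- The augmentation of the free resolution of `ℚ`. -/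
noncomputable def qF : (ℕ →₀ ℤ) →ₗ[ℤ] ℚ :=
  Finsupp.lsum ℤ fun n => LinearMap.toSpanSingleton ℤ ℚ (((n + 1).factorial : ℚ))⁻¹

lemma dF_single (n : ℕ) :
    dF (Finsupp.single n 1) = Finsupp.single n 1 - (n + 2 : ℤ) • Finsupp.single (n + 1) 1 := by
  rw [dF, Finsupp.lsum_single, LinearMap.toSpanSingleton_apply_one]

lemma qF_single (n : ℕ) (c : ℤ) :
    qF (Finsupp.single n c) = c * (((n + 1).factorial : ℚ))⁻¹ := by
  rw [qF, Finsupp.lsum_single, LinearMap.toSpanSingleton_apply, zsmul_eq_mul]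

lemma dF_rep (y : ℕ →₀ ℤ) :
    dF y = y.sum fun n c => Finsupp.single n c - Finsupp.single (n + 1) ((n + 2) * c) := by
  rw [dF, Finsupp.lsum_apply]
  apply Finsupp.sum_congr
  intro n c
  rw [LinearMap.toSpanSingleton_apply, smul_sub, smul_smul, Finsupp.smul_single,
    Finsupp.smul_single, smul_eq_mul, smul_eq_mul, mul_one]
  congr 2
  ring

lemma sum_ite_coord (y : ℕ →₀ ℤ) (j : ℕ) (v : ℕ → ℤ → ℤ) (hv : v j 0 = 0) :
    (y.sum fun n c => if n = j then v n c else 0) = v j (y j) := by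
  rw [Finsupp.sum_ite_eq']
  split
  · rfl
  · next h => rw [Finsupp.notMem_support_iff.mp h, hv]

lemma dF_apply_zero (y : ℕ →₀ ℤ) : dF y 0 = y 0 := by
  rw [dF_rep, Finsupp.sum_apply]
  have : (y.sum fun n c => (Finsupp.single n c - Finsupp.single (n + 1) ((n + 2) * c)) 0)
      = y.sum fun n c => (if n = 0 then c else 0) - 0 := by
    apply Finsupp.sum_congr
    intro n _
    simp [Finsupp.sub_apply, Finsupp.single_apply]
  rw [this]
  simp only [sub_zero]
  exact sum_ite_coord y 0 (fun _ c => c) rfl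

lemma dF_apply_succ (y : ℕ →₀ ℤ) (m : ℕ) :
    dF y (m + 1) = y (m + 1) - (m + 2) * y m := by
  rw [dF_rep, Finsupp.sum_apply]
  have : (y.sum fun n c => (Finsupp.single n c - Finsupp.single (n + 1) ((n + 2) * c)) (m + 1))
      = y.sum fun n c => (if n = m + 1 then c else 0) - (if n = m then (n + 2) * c else 0) := by
    apply Finsupp.sum_congr
    intro n _
    rw [Finsupp.sub_apply, Finsupp.single_apply, Finsupp.single_apply]
    congr 1
    simp
  rw [this, Finsupp.sum_sub, sum_ite_coord y (m + 1) (fun _ c => c) rfl,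
    sum_ite_coord y m (fun n c => ((n : ℤ) + 2) * c) (by ring)]

lemma dF_injective : Function.Injective dF := by
  have key : ∀ y, dF y = 0 → y = 0 := by
    intro y h
    have hc : ∀ m, y m = 0 := by
      intro m
      induction m with
      | zero =>
        have := dF_apply_zero y
        rw [h] at this
        exact this.symm
      | succ m ih =>
        have := dF_apply_succ y m
        rw [h] at this
        simp only [Finsupp.coe_zero, Pi.zero_apply] at this
        rw [ih, mul_zero, sub_zero] at this
        exact this.symm
    ext m
    exact hc m
  intro a b hab
  have := key (a - b) (by rw [map_sub, hab, sub_self])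
  exact sub_eq_zero.mp this

lemma factorial_ne_zero_q (n : ℕ) : ((n.factorial : ℚ)) ≠ 0 := by
  exact_mod_cast Nat.factorial_ne_zero n

lemma qF_surjective : Function.Surjective qF := by
  intro q
  have hdenpos : 0 < q.den := q.den_pos
  have hden : (q.den : ℚ) ≠ 0 := by
    exact_mod_cast Nat.pos_iff_ne_zero.mp hdenpos
  have hdvd : q.den ∣ q.den.factorial := Nat.dvd_factorial hdenpos le_rfl
  have hfact : ((q.den.factorial : ℚ)) ≠ 0 := factorial_ne_zero_q _
  refine ⟨Finsupp.single (q.den - 1) (q.num * ((q.den.factorial / q.den : ℕ) : ℤ)), ?_⟩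
  rw [qF_single]
  have e : q.den - 1 + 1 = q.den := Nat.succ_pred_eq_of_pos hdenpos
  rw [e]
  have hcast : ((q.den.factorial / q.den : ℕ) : ℚ) = (q.den.factorial : ℚ) / q.den :=
    Nat.cast_div hdvd hden
  rw [Int.cast_mul, Int.cast_natCast, hcast]
  have hgen : ∀ (a bq fq : ℚ), bq ≠ 0 → fq ≠ 0 → a * (fq / bq) * fq⁻¹ = a / bq := by
    intro a bq fq h1 h2
    field_simp
  rw [hgen (q.num : ℚ) (q.den : ℚ) (q.den.factorial : ℚ) hden hfact]
  exact Rat.num_div_den q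

lemma qF_comp_dF : qF.comp dF = 0 := by
  apply Finsupp.lhom_ext
  intro n b
  have h1 : (Finsupp.single n b : ℕ →₀ ℤ) = b • Finsupp.single n 1 := by
    rw [Finsupp.smul_single, smul_eq_mul, mul_one]
  rw [h1, map_smul, map_smul, LinearMap.comp_apply, dF_single, map_sub, map_smul,
    qF_single, qF_single, LinearMap.zero_apply, smul_zero]
  have hfac : ((n + 1 + 1).factorial : ℚ) = ((n : ℚ) + 2) * ((n + 1).factorial : ℚ) := by
    rw [Nat.factorial_succ]
    push_cast
    ring
  have hz : ((1 : ℤ) : ℚ) * (((n + 1).factorial : ℚ))⁻¹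
      - (n + 2 : ℤ) • (((1 : ℤ) : ℚ) * (((n + 1 + 1).factorial : ℚ))⁻¹) = 0 := by
    simp only [Int.cast_one, one_mul, zsmul_eq_mul]
    rw [hfac]
    have h2 := factorial_ne_zero_q (n + 1)
    have h3 : ((n : ℚ) + 2) ≠ 0 := by positivity
    push_cast
    field_simp
    ring
  rw [hz, smul_zero]

/-- Auxiliary integer sequence for `exact_qF_dF`. -/
private def bseq (x : ℕ →₀ ℤ) : ℕ → ℤ
  | 0 => x 0
  | (n + 1) => (n + 2) * bseq x n + x (n + 1)

lemma exact_qF_dF (x : ℕ →₀ ℤ) (hx : qF x = 0) : ∃ y, dF y = x := by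
  classical
  set b : ℕ → ℤ := bseq x with hb
  have hb0 : b 0 = x 0 := rfl
  have hbs : ∀ n, b (n + 1) = (n + 2) * b n + x (n + 1) := fun n => rfl
  have hcast : ∀ n, ((b n : ℤ) : ℚ) = (((n + 1).factorial : ℚ)) *
      ∑ j ∈ Finset.range (n + 1), (x j : ℚ) * (((j + 1).factorial : ℚ))⁻¹ := by
    intro n
    induction n with
    | zero =>
      rw [hb0]
      simp [Nat.factorial]
    | succ n ih =>
      rw [hbs n, Finset.sum_range_succ, mul_add]
      push_cast
      rw [ih]
      have h2 : ((n + 1 + 1).factorial : ℚ) = ((n : ℚ) + 2) * ((n + 1).factorial : ℚ) := by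
        rw [Nat.factorial_succ]; push_cast; ring
      have h3 := factorial_ne_zero_q (n + 1 + 1)
      field_simp
      ring_nf
      have e1 : 2 + n = n + 1 + 1 := by omega
      have e2 : 1 + n = n + 1 := by omega
      rw [e1, e2, h2]
      ring
  set N := x.support.sup id + 1 with hN
  have hsupp : ∀ j, N ≤ j → x j = 0 := by
    intro j hj
    by_contra h
    have hmem : j ∈ x.support := Finsupp.mem_support_iff.mpr h
    have h2 : id j ≤ x.support.sup id := Finset.le_sup hmem
    simp only [id] at h2
    omega
  have hsum : ∀ n, N ≤ n + 1 →
      ∑ j ∈ Finset.range (n + 1), (x j : ℚ) * (((j + 1).factorial : ℚ))⁻¹ = 0 := by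
    intro n hn
    have : qF x = ∑ j ∈ Finset.range (n + 1), (x j : ℚ) * (((j + 1).factorial : ℚ))⁻¹ := by
      rw [qF, Finsupp.lsum_apply]
      rw [Finsupp.sum_of_support_subset x (s := Finset.range (n + 1)) ?_ _ ?_]
      · apply Finset.sum_congr rfl
        intro j _
        rw [LinearMap.toSpanSingleton_apply, zsmul_eq_mul]
      · intro j hj
        rw [Finset.mem_range]
        have h2 : id j ≤ x.support.sup id := Finset.le_sup hj
        simp only [id] at h2
        omega
      · intro j _
        rw [LinearMap.map_zero]
    rw [← this, hx]
  have hbzero : ∀ n, N ≤ n → b n = 0 := by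
    intro n hn
    have h1 := hcast n
    rw [hsum n (by omega), mul_zero] at h1
    exact_mod_cast h1
  let y : ℕ →₀ ℤ := Finsupp.onFinset (Finset.range N) b
    (fun n hn => by rw [Finset.mem_range]; by_contra h; exact hn (hbzero n (by omega)))
  refine ⟨y, ?_⟩
  ext m
  have hy : ∀ j, y j = b j := fun j => rfl
  cases m with
  | zero => rw [dF_apply_zero, hy, hb0]
  | succ m =>
    rw [dF_apply_succ, hy, hy, hbs m]
    ring

end Resolution

section CategoryPart

open CategoryTheory Limits

/-- Lifting along `dF` from the solvability property. -/
lemma lift_dF {M : Type} [AddCommGroup M] (φ : (ℕ →₀ ℤ) →ₗ[ℤ] M)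
    (hsol : ∀ c : ℕ → M, ∃ x : ℕ → M, ∀ n, x n = c n + (n + 2) • x (n + 1)) :
    ∃ ψ : (ℕ →₀ ℤ) →ₗ[ℤ] M, ψ.comp dF = φ := by
  obtain ⟨x, hx⟩ := hsol (fun n => φ (Finsupp.single n 1))
  refine ⟨Finsupp.lsum ℤ fun n => LinearMap.toSpanSingleton ℤ M (x n), ?_⟩
  apply Finsupp.lhom_ext
  intro n b
  have h1 : (Finsupp.single n b : ℕ →₀ ℤ) = b • Finsupp.single n 1 := by
    rw [Finsupp.smul_single, smul_eq_mul, mul_one]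
  rw [h1, map_smul, map_smul]
  congr 1
  rw [LinearMap.comp_apply, dF_single, map_sub, map_smul, Finsupp.lsum_single,
    Finsupp.lsum_single, LinearMap.toSpanSingleton_apply_one, LinearMap.toSpanSingleton_apply_one]
  have h2 : ((n : ℤ) + 2) • x (n + 1) = (n + 2 : ℕ) • x (n + 1) := by
    have : ((n : ℤ) + 2) = ((n + 2 : ℕ) : ℤ) := by push_cast; ring
    rw [this, natCast_zsmul]
  rw [h2, hx n]
  abel

/-- The objects of the projective resolution of `ℚ`. -/
noncomputable def cpxX : ℕ → ModuleCat ℤ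
  | 0 => ModuleCat.of ℤ (ℕ →₀ ℤ)
  | 1 => ModuleCat.of ℤ (ℕ →₀ ℤ)
  | _ + 2 => ModuleCat.of ℤ PUnit

/-- The differentials of the projective resolution of `ℚ`. -/
noncomputable def cpxd : ∀ n, cpxX (n + 1) ⟶ cpxX n
  | 0 => ModuleCat.ofHom dF
  | (_ + 1) => 0

/-- The projective resolution complex of `ℚ`. -/
noncomputable def cpx : ChainComplex (ModuleCat ℤ) ℕ :=
  ChainComplex.of cpxX cpxd (fun _ => zero_comp)

lemma cpx_d_1_0 : cpx.d 1 0 = ModuleCat.ofHom dF :=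
  ChainComplex.of_d cpxX cpxd 0

lemma cpx_d_2_1 : cpx.d 2 1 = 0 :=
  ChainComplex.of_d cpxX cpxd 1
lemma cpx_X (n : ℕ) : cpx.X n = cpxX n := rfl

lemma hdq : cpx.d 1 0 ≫ ModuleCat.ofHom qF = 0 := by
  rw [cpx_d_1_0]
  exact ModuleCat.hom_ext qF_comp_dF

lemma cpx_exactAt_succ (n : ℕ) : cpx.ExactAt (n + 1) := by
  rw [HomologicalComplex.exactAt_iff' _ (n + 2) (n + 1) n (by simp) (by simp)]
  match n with
  | 0 =>
    rw [ShortComplex.moduleCat_exact_iff]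
    intro x hx
    have hx' : dF x = 0 := by
      have : (cpx.d 1 0) x = dF x := by rw [cpx_d_1_0]; rfl
      rw [← this]
      exact hx
    have hx0 : x = 0 := dF_injective (by rw [hx', map_zero] : dF x = dF (0 : ℕ →₀ ℤ))
    refine ⟨0, ?_⟩
    rw [map_zero, hx0]
  | n + 1 =>
    exact ShortComplex.exact_of_isZero_X₂ _
      (ModuleCat.isZero_of_subsingleton (ModuleCat.of ℤ PUnit))

/-- The projective resolution of `ℚ`. -/
noncomputable def pres : ProjectiveResolution (ModuleCat.of ℤ ℚ) where
  complex := cpx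
  projective n := by
    match n with
    | 0 => exact ModuleCat.projective_of_free Finsupp.basisSingleOne
    | 1 => exact ModuleCat.projective_of_free Finsupp.basisSingleOne
    | n + 2 => exact (ModuleCat.isZero_of_subsingleton
        (ModuleCat.of ℤ PUnit)).projective
  π := (ChainComplex.toSingle₀Equiv cpx (ModuleCat.of ℤ ℚ)).symm ⟨ModuleCat.ofHom qF, hdq⟩
  quasiIso := ⟨fun n => by
    cases n with
    | zero =>
      rw [ChainComplex.quasiIsoAt₀_iff, ShortComplex.quasiIso_iff_of_zeros']
      · have hf0 : ((ChainComplex.toSingle₀Equiv cpx (ModuleCat.of ℤ ℚ)).symm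
            ⟨ModuleCat.ofHom qF, hdq⟩).f 0 = ModuleCat.ofHom qF :=
          ChainComplex.toSingle₀Equiv_symm_apply_f_zero _ _
        constructor
        · rw [ShortComplex.moduleCat_exact_iff]
          intro x hx
          have hx1 : (((ChainComplex.toSingle₀Equiv cpx (ModuleCat.of ℤ ℚ)).symm
              ⟨ModuleCat.ofHom qF, hdq⟩).f 0) x = 0 := hx
          rw [hf0] at hx1
          obtain ⟨y, hy⟩ := exact_qF_dF x hx1
          refine ⟨y, ?_⟩
          show (cpx.d 1 0) y = x
          rw [cpx_d_1_0]
          exact hy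
        · have h1 : Epi (ModuleCat.ofHom qF) :=
            (ModuleCat.epi_iff_surjective _).2 qF_surjective
          rw [← hf0] at h1
          exact h1
      all_goals rfl
    | succ n =>
      rw [quasiIsoAt_iff_exactAt']
      · exact cpx_exactAt_succ n
      · exact ChainComplex.exactAt_succ_single_obj _ _⟩

end CategoryPart

section Final

open CategoryTheory Limits

lemma subsingleton_of_isZero {M : ModuleCat ℤ} (h : IsZero M) : Subsingleton M := by
  have h0 : (𝟙 M : M ⟶ M) = 0 := h.eq_of_src _ _
  refine ⟨fun a b => ?_⟩
  calc a = (𝟙 M : M ⟶ M) a := (ModuleCat.id_apply M a).symm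
    _ = (0 : M ⟶ M) a := by rw [h0]
    _ = (𝟙 M : M ⟶ M) b := by rw [h0]; rfl
    _ = b := ModuleCat.id_apply M b

lemma isCotorsion_of_solvable (A : Type) [AddCommGroup A]
    (hsol : ∀ c : ℕ → A, ∃ x : ℕ → A, ∀ n, x n = c n + (n + 2) • x (n + 1)) :
    IsCotorsion A := by
  have hex : (cpx.linearYonedaObj ℤ (ModuleCat.of ℤ A)).ExactAt 1 := by
    rw [HomologicalComplex.exactAt_iff' _ 0 1 2 (by simp) (by simp),
      ShortComplex.moduleCat_exact_iff]
    intro φ _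
    obtain ⟨ψ, hψ⟩ := lift_dF (M := A) (show (ℕ →₀ ℤ) →ₗ[ℤ] A from φ.hom) hsol
    refine ⟨ModuleCat.ofHom ψ, ?_⟩
    show cpx.d 1 0 ≫ ModuleCat.ofHom ψ = φ
    rw [cpx_d_1_0]
    ext y
    exact LinearMap.congr_fun hψ y
  have hz := (HomologicalComplex.exactAt_iff_isZero_homology _ 1).1 hex
  have hsub : Subsingleton ((cpx.linearYonedaObj ℤ (ModuleCat.of ℤ A)).homology 1) :=
    subsingleton_of_isZero hz
  have e := pres.isoExt (R := ℤ) 1 (ModuleCat.of ℤ A)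
  show Subsingleton _
  refine ⟨fun a b => ?_⟩
  have h1 : e.hom a = e.hom b := @Subsingleton.elim _ hsub _ _
  calc a = e.inv (e.hom a) := (e.hom_inv_id_apply a).symm
    _ = e.inv (e.hom b) := by rw [h1]
    _ = b := e.hom_inv_id_apply b

end Final

/-- For a tower of groups satisfying the Mittag-Leffler condition, the natural map
`Ab(lim G) → lim Ab(G)` is surjective with cotorsion kernel. -/
theorem stmt_6 (G : ℕ → Type) [∀ n, Group (G n)] (g : ∀ n, G (n + 1) →* G n)
    (hML : MittagLeffler G g) :
    Function.Surjective (abLimToLimAb G g) ∧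
      IsCotorsion (Additive (abLimToLimAb G g).ker) := by
  constructor
  · exact surjective_abLimToLimAb G g hML
  · apply isCotorsion_of_solvable
    intro c
    obtain ⟨x, hx⟩ := solvable G g hML (fun n => Additive.toMul (c n))
    refine ⟨fun n => Additive.ofMul (x n), fun n => ?_⟩
    show Additive.ofMul (x n) = c n + (n + 2) • Additive.ofMul (x (n + 1))
    rw [hx n, ofMul_mul, ofMul_pow]
    simp
end

section
/- Let (H_n)_{n∈ℕ} be a countable family of groups and let K be the kernel of the natural surjection Ab(∏_n H_n) → ∏_n Ab(H_n). Then for every prime p, the p-length of K satisfies l_p(K) ≤ ℵ₁ (i.e., p^{ℵ₁} K is p-divisible). -/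
/-- The transfinite `p`-power subgroup `p^λ A`. -/
noncomputable def pPow (p : ℕ) (A : Type) [AddCommGroup A] (lam : Ordinal) : AddSubgroup A :=
  Ordinal.limitRecOn lam ⊤ (fun _ S => S.map (zsmulAddGroupHom (p : ℤ)))
    (fun o _ ih => ⨅ b : Set.Iio o, ih b.1 b.2)

/-- The `p`-length of `A`: the least ordinal `λ` with `p^(λ+1) A = p^λ A`. -/
noncomputable def pLength (p : ℕ) (A : Type) [AddCommGroup A] : Ordinal :=
  sInf {o : Ordinal | pPow p A (o + 1) = pPow p A o}

/-- The coordinatewise abelianization map on a countable product. -/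
def prodAbHom (H : ℕ → Type) [∀ n, Group (H n)] :
    (∀ n, H n) →* ∀ n, Abelianization (H n) :=
  MonoidHom.mk' (fun x n => Abelianization.of (x n)) (by intro a b; funext n; simp)

/-- The natural map `Ab(∏ₙ Hₙ) → ∏ₙ Ab(Hₙ)`. -/
def abProdToProdAb (H : ℕ → Type) [∀ n, Group (H n)] :
    Abelianization (∀ n, H n) →* ∀ n, Abelianization (H n) :=
  Abelianization.lift (prodAbHom H)

/-! ### Auxiliary development

We show that `p^{ω₁} K` is `p`-divisible, where `K` is the kernel above, which gives the
bound on the `p`-length.  The key notions are *uniformly bounded width* elements of the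
product (coordinatewise products of at most `k` commutators), which are exactly the
elements of the commutator subgroup of the product, and infinite chains of approximate
`p`-th roots with uniform width bounds. -/

open scoped commutatorElement

section CommList

variable {G : Type*} [Group G]

/-- Product of a list of commutators. -/
def commProd (l : List (G × G)) : G := (l.map fun q => ⁅q.1, q.2⁆).prod

@[simp] lemma commProd_nil : commProd ([] : List (G × G)) = 1 := rfl

lemma commProd_cons (q : G × G) (l : List (G × G)) :
    commProd (q :: l) = ⁅q.1, q.2⁆ * commProd l := by
  simp [commProd]

lemma commProd_append (l₁ l₂ : List (G × G)) :
    commProd (l₁ ++ l₂) = commProd l₁ * commProd l₂ := by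
  simp [commProd]

lemma commProd_mem (l : List (G × G)) : commProd l ∈ commutator G := by
  induction l with
  | nil => simp [Subgroup.one_mem]
  | cons q l ih =>
      rw [commProd_cons]
      exact Subgroup.mul_mem _
        (commutator_def G ▸ Subgroup.commutator_mem_commutator (Subgroup.mem_top _)
          (Subgroup.mem_top _)) ih

lemma exists_commProd_inv (l : List (G × G)) :
    ∃ l' : List (G × G), l'.length = l.length ∧ commProd l' = (commProd l)⁻¹ := by
  induction l with
  | nil => exact ⟨[], rfl, by simp⟩
  | cons q l ih =>
      obtain ⟨l', hlen, hprod⟩ := ih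
      refine ⟨l' ++ [(q.2, q.1)], by simp [hlen], ?_⟩
      rw [commProd_append, hprod, commProd_cons, commProd_cons, commProd_nil]
      simp [mul_inv_rev, commutatorElement_inv]

lemma mem_commutator_iff_commProd (g : G) :
    g ∈ commutator G ↔ ∃ l : List (G × G), commProd l = g := by
  constructor
  · intro hg
    rw [commutator_eq_closure] at hg
    induction hg using Subgroup.closure_induction with
    | mem x hx =>
        obtain ⟨a, b, rfl⟩ := hx
        exact ⟨[(a, b)], by simp [commProd_cons]⟩
    | one => exact ⟨[], rfl⟩
    | mul x y hx hy ihx ihy =>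
        obtain ⟨l₁, h₁⟩ := ihx
        obtain ⟨l₂, h₂⟩ := ihy
        exact ⟨l₁ ++ l₂, by rw [commProd_append, h₁, h₂]⟩
    | inv x hx ihx =>
        obtain ⟨l, hl⟩ := ihx
        obtain ⟨l', _, hl'⟩ := exists_commProd_inv l
        exact ⟨l', by rw [hl', hl]⟩
  · rintro ⟨l, rfl⟩
    exact commProd_mem l

end CommList

section Pi

variable {H : ℕ → Type} [∀ n, Group (H n)]

lemma commProd_apply (l : List ((∀ n, H n) × (∀ n, H n))) (n : ℕ) :
    commProd l n = commProd (l.map fun q => (q.1 n, q.2 n)) := by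
  induction l with
  | nil => rfl
  | cons q l ih =>
      rw [commProd_cons, List.map_cons, commProd_cons, Pi.mul_apply, ih]
      rfl

/-- Bounded width: every coordinate is a product of at most `k` commutators. -/
def BW (k : ℕ) (g : ∀ n, H n) : Prop :=
  ∀ n, ∃ l : List (H n × H n), l.length ≤ k ∧ commProd l = g n

lemma BW.mono {k k' : ℕ} (hk : k ≤ k') {g : ∀ n, H n} (h : BW k g) : BW k' g := by
  intro n
  obtain ⟨l, hl, hp⟩ := h n
  exact ⟨l, hl.trans hk, hp⟩

/-- exact-length version -/
lemma BW.exact {k : ℕ} {g : ∀ n, H n} (h : BW k g) :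
    ∀ n, ∃ l : List (H n × H n), l.length = k ∧ commProd l = g n := by
  intro n
  obtain ⟨l, hl, hp⟩ := h n
  refine ⟨l ++ List.replicate (k - l.length) (1, 1), by simp; omega, ?_⟩
  rw [commProd_append, hp]
  suffices hh : commProd (List.replicate (k - l.length) ((1 : H n), (1 : H n))) = 1 by
    rw [hh, mul_one]
  unfold commProd
  rw [List.map_replicate]
  simp

/-- The key assembly lemma: uniformly bounded width implies membership in the commutator
subgroup of the product. -/
lemma BW.mem_commutator {k : ℕ} {g : ∀ n, H n} (h : BW k g) :
    g ∈ commutator (∀ n, H n) := by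
  induction k generalizing g with
  | zero =>
      have : g = 1 := by
        funext n
        obtain ⟨l, hl, hp⟩ := h n
        have hl0 : l = [] := List.length_eq_zero_iff.mp (Nat.le_zero.mp hl)
        rw [← hp, hl0, commProd_nil]; rfl
      rw [this]; exact Subgroup.one_mem _
  | succ k ih =>
      have h' := h.exact
      choose l hlen hprod using h'
      have hne : ∀ n, l n ≠ [] := by
        intro n hn
        have := hlen n
        rw [hn] at this
        simp at this
      set a : ∀ n, H n := fun n => ((l n).head (hne n)).1 with ha
      set b : ∀ n, H n := fun n => ((l n).head (hne n)).2 with hb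
      set g' : ∀ n, H n := fun n => commProd ((l n).tail) with hg'
      have hdec : g = ⁅a, b⁆ * g' := by
        funext n
        have hcons : l n = (l n).head (hne n) :: (l n).tail := (List.cons_head_tail (hne n)).symm
        rw [← hprod n, hcons, commProd_cons]
        rfl
      rw [hdec]
      refine Subgroup.mul_mem _
        (commutator_def (∀ n, H n) ▸ Subgroup.commutator_mem_commutator (Subgroup.mem_top _)
          (Subgroup.mem_top _)) ?_
      refine ih ?_
      intro n
      refine ⟨(l n).tail, ?_, rfl⟩
      have := hlen n
      rw [List.length_tail, this]
      omega

/-- Conversely, membership in the commutator subgroup gives a uniform bound. -/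
lemma exists_BW_of_mem_commutator {g : ∀ n, H n} (h : g ∈ commutator (∀ n, H n)) :
    ∃ k, BW k g := by
  rw [mem_commutator_iff_commProd] at h
  obtain ⟨L, hL⟩ := h
  refine ⟨L.length, fun n => ⟨L.map fun q => (q.1 n, q.2 n), by simp, ?_⟩⟩
  rw [← commProd_apply, hL]

end Pi

section Ker

variable {H : ℕ → Type} [∀ n, Group (H n)]

lemma abel_of_eq_one_iff_s16 {G : Type*} [Group G] (g : G) :
    Abelianization.of g = 1 ↔ g ∈ commutator G :=
  QuotientGroup.eq_one_iff g

lemma abel_of_eq_iff (x y : ∀ n, H n) :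
    Abelianization.of x = Abelianization.of y ↔ ∃ k, BW k (x * y⁻¹) := by
  rw [← mul_inv_eq_one, ← map_inv, ← map_mul, abel_of_eq_one_iff_s16]
  constructor
  · exact exists_BW_of_mem_commutator
  · rintro ⟨k, hk⟩; exact hk.mem_commutator

lemma of_mem_ker_iff (x : ∀ n, H n) :
    Abelianization.of x ∈ (abProdToProdAb H).ker ↔ ∀ n, x n ∈ commutator (H n) := by
  rw [MonoidHom.mem_ker]
  unfold abProdToProdAb
  rw [Abelianization.lift_apply_of]
  constructor
  · intro h n
    have : prodAbHom H x n = 1 := by rw [h]; rfl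
    rwa [show prodAbHom H x n = Abelianization.of (x n) from rfl, abel_of_eq_one_iff_s16] at this
  · intro h
    funext n
    show Abelianization.of (x n) = 1
    rw [abel_of_eq_one_iff_s16]
    exact h n

end Ker

/-- The canonical element of `Additive K` represented by `x`. -/
noncomputable def elemK (H : ℕ → Type) [∀ n, Group (H n)] (x : ∀ n, H n) :
    Additive (abProdToProdAb H).ker :=
  letI := Classical.dec (Abelianization.of x ∈ (abProdToProdAb H).ker)
  if h : Abelianization.of x ∈ (abProdToProdAb H).ker then
    Additive.ofMul (⟨Abelianization.of x, h⟩ : (abProdToProdAb H).ker) else 0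

section Ker2

variable {H : ℕ → Type} [∀ n, Group (H n)]

lemma elemK_surjective (a : Additive (abProdToProdAb H).ker) :
    ∃ x : ∀ n, H n, (∀ n, x n ∈ commutator (H n)) ∧ elemK H x = a := by
  obtain ⟨x, hx⟩ : ∃ x : ∀ n, H n,
      Abelianization.of x = ((Additive.toMul a : (abProdToProdAb H).ker) :
        Abelianization (∀ n, H n)) := Quot.exists_rep _
  have hmem : Abelianization.of x ∈ (abProdToProdAb H).ker := by
    rw [hx]; exact (Additive.toMul a).2
  refine ⟨x, (of_mem_ker_iff x).mp hmem, ?_⟩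
  classical
  rw [elemK, dif_pos hmem]
  exact congrArg Additive.ofMul (Subtype.ext hx)

lemma elemK_congr {x y : ∀ n, H n} (h : Abelianization.of x = Abelianization.of y) :
    elemK H x = elemK H y := by
  classical
  by_cases hx : Abelianization.of x ∈ (abProdToProdAb H).ker
  · have hy : Abelianization.of y ∈ (abProdToProdAb H).ker := by rw [← h]; exact hx
    rw [elemK, dif_pos hx, elemK, dif_pos hy]
    exact congrArg Additive.ofMul (Subtype.ext h)
  · have hy : Abelianization.of y ∉ (abProdToProdAb H).ker := by rw [← h]; exact hx
    rw [elemK, dif_neg hx, elemK, dif_neg hy]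

lemma elemK_inj {x y : ∀ n, H n} (hx : Abelianization.of x ∈ (abProdToProdAb H).ker)
    (hy : Abelianization.of y ∈ (abProdToProdAb H).ker) (h : elemK H x = elemK H y) :
    Abelianization.of x = Abelianization.of y := by
  classical
  rw [elemK, dif_pos hx, elemK, dif_pos hy] at h
  have := congrArg (fun a => ((Additive.toMul a : (abProdToProdAb H).ker) :
    Abelianization (∀ n, H n))) h
  simpa using this

lemma elemK_zsmul (q : ℕ) {y : ∀ n, H n} (hy : ∀ n, y n ∈ commutator (H n)) :
    (q : ℤ) • elemK H y = elemK H (y ^ q) := by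
  have hy' : ∀ n, (y ^ q) n ∈ commutator (H n) := by
    intro n
    rw [Pi.pow_apply]
    exact Subgroup.pow_mem _ (hy n) q
  classical
  rw [elemK, dif_pos ((of_mem_ker_iff y).mpr hy), elemK, dif_pos ((of_mem_ker_iff _).mpr hy')]
  rw [← ofMul_zpow]
  refine congrArg Additive.ofMul (Subtype.ext ?_)
  rw [SubgroupClass.coe_zpow, zpow_natCast]
  show (Abelianization.of y) ^ q = Abelianization.of (y ^ q)
  exact (map_pow Abelianization.of y q).symm

end Ker2

section PPow

variable (p : ℕ) (A : Type) [AddCommGroup A]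

theorem pPow_zero : pPow p A 0 = ⊤ := Ordinal.limitRecOn_zero _ _ _

theorem pPow_succ (o : Ordinal) :
    pPow p A (o + 1) = (pPow p A o).map (zsmulAddGroupHom (p : ℤ)) := by
  unfold pPow
  rw [Ordinal.add_one_eq_succ, Ordinal.limitRecOn_succ]

theorem pPow_limit {o : Ordinal} (ho : Order.IsSuccLimit o) :
    pPow p A o = ⨅ b : Set.Iio o, pPow p A b.1 := by
  unfold pPow
  rw [Ordinal.limitRecOn_limit _ _ _ _ ho]

theorem mem_pPow_succ {o : Ordinal} {a : A} :
    a ∈ pPow p A (o + 1) ↔ ∃ b ∈ pPow p A o, (p : ℤ) • b = a := by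
  rw [pPow_succ]
  constructor
  · rintro ⟨b, hb, rfl⟩
    exact ⟨b, hb, rfl⟩
  · rintro ⟨b, hb, rfl⟩
    exact ⟨b, hb, rfl⟩

theorem pPow_succ_le (o : Ordinal) : pPow p A (o + 1) ≤ pPow p A o := by
  rw [pPow_succ]
  rintro _ ⟨b, hb, rfl⟩
  exact AddSubgroup.zsmul_mem _ hb _

theorem pPow_antitone : ∀ {γ β : Ordinal}, β ≤ γ → pPow p A γ ≤ pPow p A β := by
  intro γ
  induction γ using Ordinal.induction with
  | h γ IH =>
    intro β hβ
    rcases eq_or_lt_of_le hβ with rfl | hlt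
    · exact le_rfl
    rcases Ordinal.zero_or_succ_or_isSuccLimit γ with h0 | ⟨o, ho⟩ | hl
    · subst h0; exact absurd hlt (not_lt_of_ge (zero_le (a := β)))
    · subst ho
      have h1 : pPow p A (Order.succ o) ≤ pPow p A o := by
        rw [← Ordinal.add_one_eq_succ]; exact pPow_succ_le p A o
      exact h1.trans (IH o (Order.lt_succ o) (Order.le_of_lt_succ hlt))
    · rw [pPow_limit p A hl]
      exact iInf_le _ (⟨β, hlt⟩ : Set.Iio γ)

end PPow

section Chain

variable {H : ℕ → Type} [∀ n, Group (H n)] (p : ℕ)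

/-- An infinite chain of approximate `p`-th roots with uniform width bounds gives
membership in every transfinite stage. -/
lemma chain_mem_pPow :
    ∀ (γ : Ordinal) (z : ℕ → ∀ n, H n) (κ : ℕ → ℕ),
      (∀ i n, z i n ∈ commutator (H n)) →
      (∀ i, BW (κ i) (z i * ((z (i + 1)) ^ p)⁻¹)) →
      elemK H (z 0) ∈ pPow p (Additive (abProdToProdAb H).ker) γ := by
  intro γ
  induction γ using Ordinal.induction with
  | h γ IH =>
    intro z κ hz hstep
    rcases Ordinal.zero_or_succ_or_isSuccLimit γ with h0 | ⟨o, ho⟩ | hl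
    · subst h0
      rw [pPow_zero]
      exact AddSubgroup.mem_top _
    · subst ho
      rw [← Ordinal.add_one_eq_succ, mem_pPow_succ]
      refine ⟨elemK H (z 1), ?_, ?_⟩
      · have := IH o (by rw [← Ordinal.add_one_eq_succ] at *; exact lt_add_one o)
          (fun i => z (i + 1)) (fun i => κ (i + 1)) (fun i n => hz (i + 1) n)
          (fun i => hstep (i + 1))
        exact this
      · rw [elemK_zsmul p (fun n => hz 1 n)]
        apply elemK_congr
        exact ((abel_of_eq_iff _ _).mpr ⟨κ 0, hstep 0⟩).symm
    · rw [pPow_limit p _ hl, AddSubgroup.mem_iInf]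
      intro b
      exact IH b.1 b.2 z κ hz hstep

end Chain

section Rec

universe u

variable {H : ℕ → Type} [∀ n, Group (H n)] (p : ℕ) (x : ∀ n, H n)

/-- Approximation property: for every `γ < ω₁` there is a length-`m` chain with widths `κ`
from `x` ending at stage `γ`. -/
def chainsProp (κ : ℕ → ℕ) (m : ℕ) : Prop :=
  ∀ γ : Ordinal.{u}, γ < (Cardinal.aleph 1).ord → ∃ w : ℕ → ∀ n, H n,
    (∀ j n, w j n ∈ commutator (H n)) ∧ w 0 = x ∧
    (∀ j, j < m → BW (κ j) (w j * ((w (j + 1)) ^ p)⁻¹)) ∧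
    elemK H (w m) ∈ pPow p (Additive (abProdToProdAb H).ker) γ

lemma chainsProp_zero (hx : ∀ n, x n ∈ commutator (H n))
    (hh : ∀ γ : Ordinal.{u}, γ < (Cardinal.aleph 1).ord →
      elemK H x ∈ pPow p (Additive (abProdToProdAb H).ker) γ)
    (κ : ℕ → ℕ) : chainsProp.{u} p x κ 0 := by
  intro γ hγ
  exact ⟨fun _ => x, fun _ => hx, rfl, fun j hj => absurd hj (Nat.not_lt_zero j), hh γ hγ⟩

lemma chainsProp_congr {κ κ' : ℕ → ℕ} {m : ℕ} (heq : ∀ j, j < m → κ j = κ' j)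
    (h : chainsProp.{u} p x κ m) : chainsProp.{u} p x κ' m := by
  intro γ hγ
  obtain ⟨w, h1, h2, h3, h4⟩ := h γ hγ
  exact ⟨w, h1, h2, fun j hj => heq j hj ▸ h3 j hj, h4⟩

lemma chainsProp_succ {κ : ℕ → ℕ} {m : ℕ} (h : chainsProp.{u} p x κ m) :
    ∃ k₀, chainsProp.{u} p x (Function.update κ m k₀) (m + 1) := by
  have hlim : Order.IsSuccLimit ((Cardinal.aleph 1).ord : Ordinal.{u}) :=
    Cardinal.isSuccLimit_ord (Cardinal.aleph0_le_aleph 1)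
  have key : ∀ γ : Ordinal.{u}, γ < (Cardinal.aleph 1).ord →
      ∃ (w : ℕ → ∀ n, H n) (v : ∀ n, H n) (k : ℕ),
      (∀ j n, w j n ∈ commutator (H n)) ∧ w 0 = x ∧
      (∀ j, j < m → BW (κ j) (w j * ((w (j + 1)) ^ p)⁻¹)) ∧
      (∀ n, v n ∈ commutator (H n)) ∧ BW k (w m * (v ^ p)⁻¹) ∧
      elemK H v ∈ pPow p (Additive (abProdToProdAb H).ker) γ := by
    intro γ hγ
    have hγ1 : γ + 1 < (Cardinal.aleph 1).ord := by
      rw [Ordinal.add_one_eq_succ]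
      exact hlim.succ_lt hγ
    obtain ⟨w, hw1, hw2, hw3, hw4⟩ := h (γ + 1) hγ1
    rw [mem_pPow_succ] at hw4
    obtain ⟨b, hb, hpb⟩ := hw4
    obtain ⟨v, hv, rfl⟩ := elemK_surjective b
    rw [elemK_zsmul p hv] at hpb
    have hof : Abelianization.of (w m) = Abelianization.of (v ^ p) :=
      (elemK_inj ((of_mem_ker_iff _).mpr (fun n => by
          rw [Pi.pow_apply]; exact Subgroup.pow_mem _ (hv n) p))
        ((of_mem_ker_iff _).mpr (fun n => hw1 m n)) hpb).symm
    obtain ⟨k, hk⟩ := (abel_of_eq_iff (w m) (v ^ p)).mp hof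
    exact ⟨w, v, k, hw1, hw2, hw3, hv, hk, hb⟩
  choose w v k hw1 hw2 hw3 hv hBW hvmem using key
  set f : Ordinal.{u} → ℕ := fun γ => if hγ : γ < (Cardinal.aleph 1).ord then k γ hγ else 0
    with hf
  have pigeon : ∃ k₀, ∀ β, β < (Cardinal.aleph 1).ord →
      ∃ γ, β ≤ γ ∧ ∃ _ : γ < (Cardinal.aleph 1).ord, f γ = k₀ := by
    by_contra hcon
    push_neg at hcon
    choose B hB hB2 using hcon
    have hsup : (⨆ i : ℕ, B i) < (Cardinal.aleph 1).ord :=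
      Cardinal.iSup_lt_ord_lift_of_isRegular Cardinal.isRegular_aleph_one
        (by rw [Cardinal.mk_nat, Cardinal.lift_aleph0]; exact Cardinal.aleph0_lt_aleph_one) hB
    exact hB2 (f (⨆ i : ℕ, B i)) _ (Ordinal.le_iSup B _) hsup rfl
  obtain ⟨k₀, hk₀⟩ := pigeon
  refine ⟨k₀, ?_⟩
  intro γ hγ
  obtain ⟨γ', hγγ', hγ', hfγ'⟩ := hk₀ γ hγ
  have hkval : k γ' hγ' = k₀ := by
    rw [← hfγ', hf]
    simp only
    rw [dif_pos hγ']
  classical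
  set w' : ℕ → ∀ n, H n := fun j => if j ≤ m then w γ' hγ' j else v γ' hγ' with hw'def
  have hw'le : ∀ j, j ≤ m → w' j = w γ' hγ' j := by
    intro j hj; simp only [hw'def, if_pos hj]
  have hw'gt : ∀ j, ¬ j ≤ m → w' j = v γ' hγ' := by
    intro j hj; simp only [hw'def, if_neg hj]
  refine ⟨w', ?_, ?_, ?_, ?_⟩
  · intro j n
    by_cases hj : j ≤ m
    · rw [hw'le j hj]; exact hw1 γ' hγ' j n
    · rw [hw'gt j hj]; exact hv γ' hγ' n
  · rw [hw'le 0 (Nat.zero_le m)]; exact hw2 γ' hγ'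
  · intro j hj
    by_cases hjm : j < m
    · rw [hw'le j (le_of_lt hjm), hw'le (j+1) (Nat.succ_le_of_lt hjm),
        Function.update_of_ne (Nat.ne_of_lt hjm)]
      exact hw3 γ' hγ' j hjm
    · have hjeq : j = m := by omega
      subst hjeq
      rw [hw'le j (le_refl j), hw'gt (j+1) (by omega), Function.update_self]
      rw [← hkval]
      exact hBW γ' hγ'
  · rw [hw'gt (m+1) (by omega)]
    exact pPow_antitone p _ hγγ' (hvmem γ' hγ')

/-- The tower of width functions. -/
noncomputable def tower (hx : ∀ n, x n ∈ commutator (H n))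
    (hh : ∀ γ : Ordinal.{u}, γ < (Cardinal.aleph 1).ord →
      elemK H x ∈ pPow p (Additive (abProdToProdAb H).ker) γ) :
    (m : ℕ) → {κ : ℕ → ℕ // chainsProp.{u} p x κ m} :=
  fun m => Nat.rec (⟨fun _ => 0, chainsProp_zero p x hx hh _⟩ :
      {κ : ℕ → ℕ // chainsProp.{u} p x κ 0})
    (fun m prev => ⟨Function.update prev.1 m (chainsProp_succ p x prev.2).choose,
      (chainsProp_succ p x prev.2).choose_spec⟩) m

lemma tower_stable (hx : ∀ n, x n ∈ commutator (H n))
    (hh : ∀ γ : Ordinal.{u}, γ < (Cardinal.aleph 1).ord →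
      elemK H x ∈ pPow p (Additive (abProdToProdAb H).ker) γ) :
    ∀ m j, j < m → (tower.{u} p x hx hh m).1 j = (tower.{u} p x hx hh (j + 1)).1 j := by
  intro m
  induction m with
  | zero => intro j hj; exact absurd hj (Nat.not_lt_zero j)
  | succ m ih =>
      intro j hj
      rcases Nat.lt_succ_iff_lt_or_eq.mp hj with hj' | rfl
      · have : (tower.{u} p x hx hh (m+1)).1 j = (tower.{u} p x hx hh m).1 j := by
          show (Function.update (tower.{u} p x hx hh m).1 m _) j = _
          exact Function.update_of_ne (Nat.ne_of_lt hj') _ _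
        rw [this]
        exact ih j hj'
      · rfl

/-- The limit width function and the full approximation property. -/
lemma exists_kappa (hx : ∀ n, x n ∈ commutator (H n))
    (hh : ∀ γ : Ordinal.{u}, γ < (Cardinal.aleph 1).ord →
      elemK H x ∈ pPow p (Additive (abProdToProdAb H).ker) γ) :
    ∃ κ : ℕ → ℕ, ∀ m, chainsProp.{u} p x κ m := by
  refine ⟨fun j => (tower.{u} p x hx hh (j + 1)).1 j, fun m => ?_⟩
  exact chainsProp_congr p x (fun j hj => (tower_stable p x hx hh m j hj))
    (tower.{u} p x hx hh m).2

end Rec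

section Diagonal

variable {H : ℕ → Type} [∀ n, Group (H n)] (p : ℕ) (x : ∀ n, H n)

/-- The diagonal construction: finite chains of every length with a single width function
yield an infinite chain (with a modified width function), by cutting the `n`-th chain at
depth `n` and absorbing the single exit cost at each level. -/
lemma exists_infinite_chain {κ : ℕ → ℕ} (hx : ∀ n, x n ∈ commutator (H n))
    (hall : ∀ m : ℕ, ∃ w : ℕ → ∀ n, H n,
      (∀ j n, w j n ∈ commutator (H n)) ∧ w 0 = x ∧
      (∀ j, j < m → BW (κ j) (w j * ((w (j + 1)) ^ p)⁻¹))) :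
    ∃ (z : ℕ → ∀ n, H n) (κ' : ℕ → ℕ),
      z 0 = x ∧ (∀ i n, z i n ∈ commutator (H n)) ∧
      (∀ i, BW (κ' i) (z i * ((z (i + 1)) ^ p)⁻¹)) := by
  choose W hW1 hW2 hW3 using hall
  -- exit lists
  have hWc : ∀ m : ℕ, (W m) m m ∈ commutator (H m) := fun m => hW1 m m m
  choose eL heL using fun m => (mem_commutator_iff_commProd ((W m) m m)).mp (hWc m)
  classical
  set z : ℕ → ∀ n, H n := fun i n => if i ≤ n then W n i n else 1 with hzdef
  have hz_apply : ∀ i n, z i n = if i ≤ n then W n i n else 1 := fun i n => rfl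
  refine ⟨z, fun i => max (κ i) (eL i).length, ?_, ?_, ?_⟩
  · funext n
    rw [hz_apply 0 n, if_pos (Nat.zero_le n)]
    exact congrFun (hW2 n) n
  · intro i n
    rw [hz_apply i n]
    by_cases h : i ≤ n
    · rw [if_pos h]; exact hW1 n i n
    · rw [if_neg h]; exact Subgroup.one_mem _
  · intro i n
    have hexp : (z i * ((z (i + 1)) ^ p)⁻¹) n = z i n * ((z (i + 1) n) ^ p)⁻¹ := by
      simp
    rcases lt_trichotomy n i with hni | rfl | hin
    · refine ⟨[], by simp, ?_⟩
      rw [hexp, hz_apply i n, if_neg (by omega), hz_apply (i+1) n, if_neg (by omega)]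
      simp
    · refine ⟨eL n, le_max_right _ _, ?_⟩
      rw [hexp, hz_apply n n, if_pos (le_refl n), hz_apply (n+1) n, if_neg (by omega)]
      rw [heL n]
      simp
    · obtain ⟨l, hlen, hprod⟩ := hW3 n i hin n
      refine ⟨l, hlen.trans (le_max_left _ _), ?_⟩
      rw [hexp, hz_apply i n, if_pos (by omega), hz_apply (i+1) n, if_pos (by omega)]
      refine hprod.trans ?_
      simp

end Diagonal

section Main

universe u

variable {H : ℕ → Type} [∀ n, Group (H n)] (p : ℕ)

theorem pPow_aleph_one_stab :
    pPow p (Additive (abProdToProdAb H).ker) (((Cardinal.aleph 1).ord : Ordinal.{u}) + 1) =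
      pPow p (Additive (abProdToProdAb H).ker) ((Cardinal.aleph 1).ord : Ordinal.{u}) := by
  apply le_antisymm (pPow_succ_le p _ _)
  intro a ha
  obtain ⟨x, hx, rfl⟩ := elemK_surjective a
  have hh : ∀ γ : Ordinal.{u}, γ < (Cardinal.aleph 1).ord →
      elemK H x ∈ pPow p (Additive (abProdToProdAb H).ker) γ :=
    fun γ hγ => pPow_antitone p _ (le_of_lt hγ) ha
  obtain ⟨κ, hκ⟩ := exists_kappa.{u} p x hx hh
  have hall : ∀ m : ℕ, ∃ w : ℕ → ∀ n, H n,
      (∀ j n, w j n ∈ commutator (H n)) ∧ w 0 = x ∧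
      (∀ j, j < m → BW (κ j) (w j * ((w (j + 1)) ^ p)⁻¹)) := by
    intro m
    have h0 : (0 : Ordinal.{u}) < (Cardinal.aleph 1).ord :=
      (Cardinal.isSuccLimit_ord (Cardinal.aleph0_le_aleph 1)).pos
    obtain ⟨w, h1, h2, h3, _⟩ := hκ m 0 h0
    exact ⟨w, h1, h2, h3⟩
  obtain ⟨z, κ', hz0, hzc, hzs⟩ := exists_infinite_chain p x hx hall
  rw [mem_pPow_succ]
  refine ⟨elemK H (z 1), ?_, ?_⟩
  · exact chain_mem_pPow p _ (fun i => z (i + 1)) (fun i => κ' (i + 1))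
      (fun i n => hzc (i + 1) n) (fun i => hzs (i + 1))
  · rw [elemK_zsmul p (fun n => hzc 1 n)]
    apply elemK_congr
    refine ((abel_of_eq_iff _ _).mpr ⟨κ' 0, ?_⟩).symm
    rw [← hz0]
    exact hzs 0

end Main

/-- For every prime `p`, the `p`-length of the kernel of `Ab(∏ₙ Hₙ) → ∏ₙ Ab(Hₙ)` is at
most `ℵ₁`. -/
theorem stmt_16 (H : ℕ → Type) [∀ n, Group (H n)] (p : ℕ) (hp : p.Prime) :
    pLength p (Additive (abProdToProdAb H).ker) ≤ (Cardinal.aleph 1).ord :=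
  csInf_le' (pPow_aleph_one_stab p)
end
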